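/- Every finite connected 4-regular simple graph with an odd number of vertices admits a rooted decomposition into two odd closed trails, i.e., a rooted 2-odd decomposition. -/

import Mathlib

open SimpleGraph

namespace OddDecomp

variable {V : Type*}

/-- count of `x` at positions of parity `b` (`false` = even index) in a list. -/
def tcnt (x : V) [DecidableEq V] : Bool → List V → ℕ
  | _, [] => 0
  | b, a :: l => (if x = a ∧ b = false then 1 else 0) + tcnt x (!b) l

variable [DecidableEq V]

lemma tcnt_nil (x : V) (b) : tcnt x b ([] : List V) = 0 := rfl

lemma tcnt_cons (x a : V) (b) (l : List V) :
    tcnt x b (a :: l) = (if x = a ∧ b = false then 1 else 0) + tcnt x (!b) l := rfl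

lemma bool_parity_succ (b : Bool) (n : ℕ) :
    ((!b) ^^ (n % 2 == 1)) = (b ^^ ((n + 1) % 2 == 1)) := by
  rcases Nat.mod_two_eq_zero_or_one n with h | h <;>
    simp [Nat.add_mod, h] <;> cases b <;> rfl

lemma tcnt_append (x : V) (b : Bool) (l1 l2 : List V) :
    tcnt x b (l1 ++ l2) = tcnt x b l1 + tcnt x (b ^^ (l1.length % 2 == 1)) l2 := by
  induction l1 generalizing b with
  | nil => simp [tcnt]
  | cons a l ih =>
      simp only [List.cons_append, tcnt_cons, ih (!b), List.length_cons]
      rw [bool_parity_succ]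
      ring

lemma tcnt_add_tcnt (x : V) (b : Bool) (l : List V) :
    tcnt x b l + tcnt x (!b) l = l.count x := by
  induction l generalizing b with
  | nil => rfl
  | cons a l ih =>
      have H := ih b
      simp only [tcnt_cons, Bool.not_not, List.count_cons, beq_iff_eq]
      by_cases hxa : x = a
      · subst hxa
        cases b <;> simp only [Bool.not_false, Bool.not_true] at H ⊢ <;> simp <;> omega
      · have hax : ¬ a = x := fun h => hxa h.symm
        cases b <;> simp only [Bool.not_false, Bool.not_true] at H ⊢ <;>
          simp [hxa, hax] <;> omega

lemma tcnt_le_count (x : V) (b : Bool) (l : List V) : tcnt x b l ≤ l.count x := by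
  rw [← tcnt_add_tcnt x b l]; omega

lemma sum_tcnt [Fintype V] (b : Bool) (l : List V) :
    ∑ x, tcnt x b l = (if b then l.length / 2 else (l.length + 1) / 2) := by
  induction l generalizing b with
  | nil => simp [tcnt]
  | cons a l ih =>
      simp only [tcnt_cons, Finset.sum_add_distrib, ih (!b), List.length_cons]
      have h1 : (∑ x, if x = a ∧ b = false then 1 else 0) = if b then 0 else 1 := by
        cases b <;> simp
      rw [h1]
      cases b <;> simp <;> omega

lemma one_le_tcnt_getLast (x : V) (l : List V) (h : l ≠ []) (hx : l.getLast h = x) :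
    1 ≤ tcnt x (l.length % 2 == 0) l := by
  induction l with
  | nil => simp at h
  | cons a l ih =>
      cases l with
      | nil =>
          simp only [List.getLast_singleton] at hx
          subst hx
          simp [tcnt]
      | cons c l' =>
          have hne : (c :: l') ≠ [] := by simp
          have hlast : (c :: l').getLast hne = x := by
            rw [← hx, List.getLast_cons hne]
          have H := ih hne hlast
          have hb : (!((a :: c :: l').length % 2 == 0)) = ((c :: l').length % 2 == 0) := by
            simp only [List.length_cons]
            rcases Nat.mod_two_eq_zero_or_one l'.length with h2 | h2 <;>
              simp [Nat.add_mod, h2]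
          rw [tcnt_cons, hb]
          omega

lemma tcnt_pin (x : V) (l : List V) (h : l ≠ []) (hx : l.getLast h = x)
    (hc : l.count x = 1) :
    tcnt x (l.length % 2 == 0) l = 1 ∧ tcnt x (!(l.length % 2 == 0)) l = 0 := by
  have h1 := one_le_tcnt_getLast x l h hx
  have h2 := tcnt_add_tcnt x (l.length % 2 == 0) l
  rw [hc] at h2
  omega

lemma tcnt_eq_zero (x : V) (b : Bool) (l : List V) (hc : l.count x = 0) :
    tcnt x b l = 0 :=
  Nat.le_zero.mp (hc ▸ tcnt_le_count x b l)

lemma ncard_fiber (x : V) (l : List (Sym2 V)) (hn : l.Nodup) :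
    {y | s(x, y) ∈ l}.Finite ∧
      {y | s(x, y) ∈ l}.ncard = l.countP (fun e => x ∈ e) := by
  classical
  induction l with
  | nil => simp
  | cons e l ih =>
      obtain ⟨hfin, hcard⟩ := ih (List.nodup_cons.mp hn).2
      by_cases hx : x ∈ e
      · set y0 := Sym2.Mem.other hx with hy0
        have hspec : s(x, y0) = e := Sym2.other_spec hx
        have hset : {y | s(x, y) ∈ e :: l} = insert y0 {y | s(x, y) ∈ l} := by
          ext y
          simp only [List.mem_cons, Set.mem_setOf_eq, Set.mem_insert_iff]
          constructor
          · rintro (h | h)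
            · left
              rw [← hspec] at h
              exact Sym2.congr_right.mp h
            · right; exact h
          · rintro (rfl | h)
            · left; exact hspec
            · right; exact h
        have hy0notin : y0 ∉ {y | s(x, y) ∈ l} := by
          intro hmem
          rw [Set.mem_setOf_eq, hspec] at hmem
          exact (List.nodup_cons.mp hn).1 hmem
        refine ⟨hset ▸ hfin.insert y0, ?_⟩
        rw [hset, Set.ncard_insert_of_notMem hy0notin hfin, hcard,
          List.countP_cons]
        simp [hx]
      · have hset : {y | s(x, y) ∈ e :: l} = {y | s(x, y) ∈ l} := by
          ext y
          simp only [List.mem_cons, Set.mem_setOf_eq]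
          constructor
          · rintro (h | h)
            · exact absurd (h ▸ Sym2.mem_mk_left x y) hx
            · exact h
          · exact fun h => Or.inr h
        rw [hset, List.countP_cons]
        exact ⟨hfin, by simp [hx, hcard]⟩

lemma countP_edges_add {G : SimpleGraph V} {u w : V} (p : G.Walk u w) (x : V) :
    p.edges.countP (fun e => x ∈ e) + (if x = u then 1 else 0) + (if x = w then 1 else 0)
      = 2 * p.support.count x := by
  induction p with
  | nil =>
      rename_i u'
      by_cases hx : x = u' <;> simp [hx, List.count_cons, eq_comm]
  | cons h q ih =>
      rename_i a b c
      have hab : a ≠ b := h.ne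
      simp only [Walk.edges_cons, List.countP_cons, Walk.support_cons, List.count_cons,
        beq_iff_eq]
      by_cases hxa : x = a <;> by_cases hxb : x = b
      · exact absurd (hxa.symm.trans hxb) hab
      · subst hxa
        simp [Sym2.mem_iff, hxb, hab] at ih ⊢
        omega
      · subst hxb
        have hax : ¬ a = x := fun h' => hxa h'.symm
        simp [Sym2.mem_iff, hxa, hax] at ih ⊢
        omega
      · have hax : ¬ a = x := fun h' => hxa h'.symm
        simp [Sym2.mem_iff, hxa, hxb, hax] at ih ⊢
        omega

section Euler

variable {G : SimpleGraph V}

lemma exists_closed_trail [Fintype V]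
    (hEven : ∀ w, Even ((G.neighborSet w).ncard)) {v w0 : V} (h : G.Adj v w0) :
    ∃ p : G.Walk v v, p.IsTrail ∧ 1 ≤ p.length := by
  classical
  let S : Set ℕ := {n | ∃ u, ∃ p : G.Walk v u, p.IsTrail ∧ p.length = n}
  have hbdd : BddAbove S := ⟨Fintype.card (Sym2 V), by
    rintro n ⟨u, p, hp, rfl⟩
    rw [← p.length_edges]
    exact hp.edges_nodup.length_le_card⟩
  have hS1 : 1 ∈ S := ⟨w0, Walk.cons h Walk.nil, by simp [Walk.isTrail_def], rfl⟩
  obtain ⟨u, p, hp, hlen⟩ := Nat.sSup_mem ⟨1, hS1⟩ hbdd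
  have hext : ∀ y, G.Adj u y → s(u, y) ∈ p.edges := by
    intro y hy
    by_contra hne
    have htr : (p.concat hy).IsTrail := by
      rw [Walk.isTrail_def, Walk.edges_concat]
      simp [List.nodup_append, hp.edges_nodup, hne]
      exact fun a ha hh => hne (hh ▸ ha)
    have hmem2 : p.length + 1 ∈ S := ⟨y, p.concat hy, htr, by rw [Walk.length_concat]⟩
    have := le_csSup hbdd hmem2
    omega
  have huv : u = v := by
    by_contra hne
    have hset : {y | s(u, y) ∈ p.edges} = G.neighborSet u := by
      ext y
      constructor
      · intro hy
        exact G.mem_edgeSet.mp (p.edges_subset_edgeSet hy)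
      · exact fun hy => hext y hy
    have hcount := (ncard_fiber u p.edges hp.edges_nodup).2
    rw [hset] at hcount
    have heven : Even (p.edges.countP fun e => u ∈ e) := hcount ▸ hEven u
    rw [hp.even_countP_edges_iff u] at heven
    exact (heven (fun hh => hne hh.symm)).2 rfl
  subst huv
  have h1le : 1 ≤ sSup S := le_csSup hbdd hS1
  exact ⟨p, hp, by omega⟩

lemma exists_support_unused {T : Set V} {s : Set (Sym2 V)}
    (hclosed : ∀ a b, G.Adj a b → s(a, b) ∈ s → a ∈ T) {y a : V} (W : G.Walk y a) :
    y ∈ T → (∃ b, G.Adj a b ∧ s(a, b) ∉ s) →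
      ∃ x ∈ T, ∃ z, G.Adj x z ∧ s(x, z) ∉ s := by
  induction W with
  | nil => exact fun hy hb => ⟨_, hy, hb⟩
  | cons h W ih =>
      rename_i y' z' a'
      intro hy hb
      by_cases hyz : s(y', z') ∈ s
      · exact ih (hclosed z' y' h.symm (Sym2.eq_swap ▸ hyz)) hb
      · exact ⟨y', hy, z', h, hyz⟩

lemma deleteEdges_even [Fintype V] (hEven : ∀ w, Even ((G.neighborSet w).ncard))
    {v : V} (p : G.Walk v v) (hp : p.IsTrail) (w : V) :
    Even (((G.deleteEdges {e | e ∈ p.edges}).neighborSet w).ncard) := by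
  classical
  have hsub : {y | s(w, y) ∈ p.edges} ⊆ G.neighborSet w := fun y hy =>
    G.mem_edgeSet.mp (p.edges_subset_edgeSet hy)
  have hset : (G.deleteEdges {e | e ∈ p.edges}).neighborSet w
      = G.neighborSet w \ {y | s(w, y) ∈ p.edges} := by
    ext y
    simp only [mem_neighborSet, deleteEdges_adj, Set.mem_diff, Set.mem_setOf_eq]
  obtain ⟨hfin2, hcard⟩ := ncard_fiber w p.edges hp.edges_nodup
  have heven2 : Even (p.edges.countP fun e => w ∈ e) := by
    rw [hp.even_countP_edges_iff w]
    intro hh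
    exact absurd rfl hh
  have hfin : (G.neighborSet w).Finite := Set.toFinite _
  have hle : {y | s(w, y) ∈ p.edges}.ncard ≤ (G.neighborSet w).ncard :=
    Set.ncard_le_ncard hsub hfin
  rw [hset, Set.ncard_diff hsub hfin2]
  have h1 := hEven w
  rw [← hcard] at heven2
  rw [Nat.even_iff] at h1 heven2 ⊢
  omega

lemma exists_eulerian [Fintype V] (hconn : G.Connected)
    (hEven : ∀ w, Even ((G.neighborSet w).ncard)) (v : V) :
    ∃ p : G.Walk v v, p.IsEulerian := by
  classical
  let S : Set ℕ := {n | ∃ p : G.Walk v v, p.IsTrail ∧ p.length = n}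
  have hbdd : BddAbove S := ⟨Fintype.card (Sym2 V), by
    rintro n ⟨p, hp, rfl⟩
    rw [← p.length_edges]
    exact hp.edges_nodup.length_le_card⟩
  have h0 : 0 ∈ S := ⟨Walk.nil, by simp [Walk.isTrail_def], rfl⟩
  obtain ⟨p, hp, hlen⟩ := Nat.sSup_mem ⟨0, h0⟩ hbdd
  refine ⟨p, hp.isEulerian_of_forall_mem ?_⟩
  by_contra hcon
  push_neg at hcon
  obtain ⟨e, heG, hep⟩ := hcon
  induction e using Sym2.ind with
  | _ a b =>
  have hadj : G.Adj a b := G.mem_edgeSet.mp heG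
  obtain ⟨W⟩ := hconn.preconnected v a
  obtain ⟨x, hxsupp, z, hxz, hxzne⟩ :=
    exists_support_unused (T := {x | x ∈ p.support}) (s := {e | e ∈ p.edges})
      (fun a' b' _ hmem => p.fst_mem_support_of_mem_edges hmem) W
      p.start_mem_support ⟨b, hadj, hep⟩
  set G' := G.deleteEdges {e | e ∈ p.edges} with hG'
  have hadj' : G'.Adj x z := by
    rw [hG', deleteEdges_adj]
    exact ⟨hxz, hxzne⟩
  obtain ⟨c, hc, hclen⟩ := exists_closed_trail (G := G') (deleteEdges_even hEven p hp) hadj'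
  have hce : ∀ e ∈ c.edges, e ∈ G.edgeSet := by
    intro e he
    have := c.edges_subset_edgeSet he
    rw [hG', edgeSet_deleteEdges] at this
    exact this.1
  set c' := c.transfer G hce with hc'
  have hc'_edges : c'.edges = c.edges := c.edges_transfer hce
  have hdisj : ∀ e ∈ c'.edges, e ∉ p.edges := by
    intro e he hep2
    rw [hc'_edges] at he
    have := c.edges_subset_edgeSet he
    rw [hG', edgeSet_deleteEdges] at this
    exact this.2 hep2
  set t1 := p.takeUntil x hxsupp with ht1
  set t2 := p.dropUntil x hxsupp with ht2
  set P : G.Walk v v := t1.append (c'.append t2) with hP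
  have ht12 : t1.edges ++ t2.edges = p.edges := by
    rw [← Walk.edges_append, p.take_spec hxsupp]
  have hPedges : P.edges = t1.edges ++ (c'.edges ++ t2.edges) := by
    rw [hP, Walk.edges_append, Walk.edges_append]
  have hperm : List.Perm (t1.edges ++ (c'.edges ++ t2.edges))
      ((t1.edges ++ t2.edges) ++ c'.edges) := by
    have h1 : List.Perm (c'.edges ++ t2.edges) (t2.edges ++ c'.edges) :=
      List.perm_append_comm
    have h2 := List.Perm.append_left t1.edges h1
    rw [← List.append_assoc t1.edges t2.edges c'.edges] at h2
    exact h2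
  have hPtrail : P.IsTrail := by
    rw [Walk.isTrail_def, hPedges, hperm.nodup_iff]
    refine List.Nodup.append (ht12 ▸ hp.edges_nodup) (hc'_edges ▸ hc.edges_nodup) ?_
    intro e he1 he2
    exact hdisj e he2 (ht12 ▸ he1)
  have hmemS : p.length + c.length ∈ S := by
    refine ⟨P, hPtrail, ?_⟩
    have hl12 : t1.length + t2.length = p.length := by
      have := congrArg Walk.length (p.take_spec hxsupp)
      rwa [Walk.length_append] at this
    rw [hP, Walk.length_append, Walk.length_append, Walk.length_transfer]
    omega
  have := le_csSup hbdd hmemS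
  omega

end Euler

section Split

variable {G : SimpleGraph V}

lemma tail_getLast {u x : V} (t : G.Walk u x) (hne : t.support.tail ≠ []) :
    t.support.tail.getLast hne = x := by
  rw [List.getLast_tail]
  exact t.getLast_support

lemma tcnt_pin_walk {u x : V} (t : G.Walk u x)
    (hcount : t.support.tail.count x = 1) :
    tcnt x (t.support.tail.length % 2 == 0) t.support.tail = 1 ∧
    tcnt x (!(t.support.tail.length % 2 == 0)) t.support.tail = 0 := by
  have hne : t.support.tail ≠ [] := by
    intro h
    rw [h] at hcount
    simp at hcount
  exact tcnt_pin x _ hne (tail_getLast t hne) hcount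

lemma tcnt_pin_walk' {u x : V} (t : G.Walk u x) (hcount : t.support.count x = 1) :
    tcnt x (t.support.length % 2 == 0) t.support = 1 ∧
    tcnt x (!(t.support.length % 2 == 0)) t.support = 0 :=
  tcnt_pin x _ t.support_ne_nil t.getLast_support hcount

lemma walk_cons_decomp {u v : V} (r : G.Walk u v) (h : r.support.tail ≠ []) :
    ∃ (w : V) (hadj : G.Adj u w) (r' : G.Walk w v), r = Walk.cons hadj r' := by
  cases r with
  | nil => simp at h
  | cons hadj r' => exact ⟨_, hadj, r', rfl⟩

lemma split_lemma [Fintype V] {v0 : V} (p : G.Walk v0 v0)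
    (hpE : p.IsEulerian) (hn : Odd (Fintype.card V))
    (hplen : p.length = 2 * Fintype.card V)
    (hcount : ∀ y : V, p.support.tail.count y = 2) :
    ∃ (x : V) (q1 q2 : G.Walk x x), q1.IsTrail ∧ q2.IsTrail ∧
      Odd q1.length ∧ Odd q2.length ∧
      List.Disjoint q1.edges q2.edges ∧
      (∀ e, e ∈ p.edges ↔ (e ∈ q1.edges ∨ e ∈ q2.edges)) := by
  classical
  set n := Fintype.card V with hnn
  have hLlen : p.support.tail.length = 2 * n := by
    rw [List.length_tail, p.length_support, hplen]
    omega
  -- find a vertex whose two occurrences have different position parity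
  have hex : ∃ x : V, Odd (tcnt x true p.support.tail) := by
    by_contra hno
    push_neg at hno
    simp only [Nat.not_odd_iff_even] at hno
    have heve : Even (∑ x, tcnt x true p.support.tail) :=
      Finset.even_sum _ (fun x _ => hno x)
    rw [sum_tcnt] at heve
    simp only [if_true, hLlen] at heve
    rw [Nat.mul_div_cancel_left n (by norm_num)] at heve
    exact (Nat.not_even_iff_odd.mpr hn) heve
  obtain ⟨x, hodd1⟩ := hex
  have hxL : x ∈ p.support.tail := by
    rw [← List.count_pos_iff, hcount x]
    omega
  have hx1 : x ∈ p.support := by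
    rw [p.support_eq_cons]
    exact List.mem_cons_of_mem _ hxL
  set t1 := p.takeUntil x hx1 with ht1
  set rest := p.dropUntil x hx1 with hrest0
  have hspec : t1.append rest = p := p.take_spec hx1
  have hA_cnt : t1.support.count x = 1 := p.count_support_takeUntil_eq_one hx1
  have hcnt_p : p.support.count x = p.support.tail.count x + (if x = v0 then 1 else 0) := by
    conv_lhs => rw [p.support_eq_cons]
    rw [List.count_cons]
    by_cases hxv : x = v0
    · simp [hxv]
    · have h1 : (v0 == x) = false := by
        simp only [beq_eq_false_iff_ne, ne_eq]
        exact fun h => hxv h.symm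
      simp [hxv, h1]
  have hcnt_rest : rest.support.tail.count x = 1 + (if x = v0 then 1 else 0) := by
    have h2 := congrArg (fun l => l.count x) (congrArg Walk.support hspec)
    simp only [Walk.support_append, List.count_append] at h2
    rw [hcount x] at hcnt_p
    omega
  have hrt_ne : rest.support.tail ≠ [] := by
    intro h
    rw [h] at hcnt_rest
    simp at hcnt_rest
    omega
  obtain ⟨w', hadj', rest'', hrw⟩ := walk_cons_decomp rest hrt_ne
  have hrest_tail : rest.support.tail = rest''.support := by
    rw [hrw, Walk.support_cons, List.tail_cons]
  have hx2 : x ∈ rest''.support := by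
    rw [← hrest_tail, ← List.count_pos_iff, hcnt_rest]
    omega
  set t := rest''.takeUntil x hx2 with ht
  set t3 := rest''.dropUntil x hx2 with ht3
  have hspec2 : t.append t3 = rest'' := rest''.take_spec hx2
  have hB_cnt : t.support.count x = 1 := rest''.count_support_takeUntil_eq_one hx2
  set q1 : G.Walk x x := Walk.cons hadj' t with hq1
  set q2 : G.Walk x x := t3.append t1 with hq2
  have hp_eq : t1.append (Walk.cons hadj' (t.append t3)) = p := by
    rw [hspec2, ← hrw]
    exact hspec
  have hedges : p.edges = t1.edges ++ (q1.edges ++ t3.edges) := by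
    rw [← hp_eq, Walk.edges_append, hq1, Walk.edges_cons, Walk.edges_cons, Walk.edges_append]
    simp [List.cons_append]
  have hq2e : q2.edges = t3.edges ++ t1.edges := by
    rw [hq2, Walk.edges_append]
  have hperm : List.Perm p.edges (q1.edges ++ q2.edges) := by
    rw [hedges, hq2e]
    have h1 : List.Perm (t1.edges ++ (q1.edges ++ t3.edges))
        ((q1.edges ++ t3.edges) ++ t1.edges) := List.perm_append_comm
    rw [List.append_assoc] at h1
    exact h1
  have hnodup : (q1.edges ++ q2.edges).Nodup :=
    (hperm.nodup_iff).mp hpE.isTrail.edges_nodup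
  rw [List.nodup_append] at hnodup
  have hq1t : q1.IsTrail := q1.isTrail_def.mpr hnodup.1
  have hq2t : q2.IsTrail := q2.isTrail_def.mpr hnodup.2.1
  have hdisj : List.Disjoint q1.edges q2.edges :=
    fun a ha hb => hnodup.2.2 a ha a hb rfl
  have hmemiff : ∀ e, e ∈ p.edges ↔ (e ∈ q1.edges ∨ e ∈ q2.edges) := by
    intro e
    rw [hperm.mem_iff, List.mem_append]
  -- length bookkeeping
  have hlen_sum : q1.length + q2.length = 2 * n := by
    have h1 := hperm.length_eq
    rw [List.length_append, p.length_edges, q1.length_edges, q2.length_edges, hplen] at h1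
    omega
  -- parity analysis
  have hsupp_split : p.support.tail
      = t1.support.tail ++ (t.support ++ t3.support.tail) := by
    conv_lhs => rw [← hp_eq]
    rw [Walk.tail_support_append]
    congr 1
    rw [Walk.support_cons, List.tail_cons, Walk.support_append]
  have htcL : tcnt x true p.support.tail
      = tcnt x true t1.support.tail
        + (tcnt x (true ^^ (t1.support.tail.length % 2 == 1)) t.support
          + tcnt x ((true ^^ (t1.support.tail.length % 2 == 1))
              ^^ (t.support.length % 2 == 1)) t3.support.tail) := by
    rw [hsupp_split, tcnt_append, tcnt_append]
  have hlen_split : t1.support.tail.length + (t.support.length + t3.support.tail.length)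
      = 2 * n := by
    have := congrArg List.length hsupp_split
    rw [hLlen] at this
    simp only [List.length_append] at this
    omega
  have hcnt_split : t1.support.tail.count x + (t.support.count x + t3.support.tail.count x)
      = 2 := by
    have := congrArg (fun l => l.count x) hsupp_split
    simp only [List.count_append] at this
    rw [hcount x] at this
    omega
  have hq1len : q1.length = t.support.length := by
    rw [hq1, Walk.length_cons, t.length_support]
  have hq1odd : Odd q1.length := by
    by_cases hxv : x = v0
    · -- x = v0 : takeUntil is trivial
      subst hxv
      have hAcnt0 : t1.support.tail.count x = 0 := by
        have h5 : List.count x t1.support = List.count x t1.support.tail + 1 := by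
          conv_lhs => rw [t1.support_eq_cons]
          rw [List.count_cons]
          simp
        omega
      have hAnil : t1.support.tail = [] := by
        by_contra hne
        have hlast := tail_getLast t1 hne
        have hmem : t1.support.tail.getLast hne ∈ t1.support.tail :=
          List.getLast_mem hne
        rw [hlast] at hmem
        rw [← List.count_pos_iff] at hmem
        omega
      have hCcnt1 : t3.support.tail.count x = 1 := by omega
      have hBpin := tcnt_pin_walk' t hB_cnt
      have hCpin := tcnt_pin_walk t3 hCcnt1
      rw [hAnil] at htcL hlen_split
      simp only [tcnt_nil, List.length_nil] at htcL hlen_split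
      rcases Nat.mod_two_eq_zero_or_one t.support.length with hm | hm
      · exfalso
        have e1 : (t.support.length % 2 == 0) = true := by rw [hm]; rfl
        have e2 : (t.support.length % 2 == 1) = false := by rw [hm]; rfl
        have e3 : (t3.support.tail.length % 2 == 0) = true := by
          have : t3.support.tail.length % 2 = 0 := by omega
          rw [this]; rfl
        rw [e1] at hBpin
        rw [e3] at hCpin
        rw [e2] at htcL
        simp only [show ((0 : ℕ) % 2 == 1) = false from rfl, Bool.xor_false] at htcL
        rw [hBpin.1, hCpin.1] at htcL
        rw [htcL] at hodd1
        simp [Nat.odd_iff] at hodd1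
      · have e1 : (t.support.length % 2 == 0) = false := by rw [hm]; rfl
        rw [hq1len, Nat.odd_iff, hm]
    · -- x ≠ v0
      have hAcnt1 : t1.support.tail.count x = 1 := by
        have h5 : List.count x t1.support = List.count x t1.support.tail := by
          conv_lhs => rw [t1.support_eq_cons]
          rw [List.count_cons]
          have h1 : (v0 == x) = false := by
            simp only [beq_eq_false_iff_ne, ne_eq]
            exact fun h => hxv h.symm
          simp [h1]
        omega
      have hCcnt0 : t3.support.tail.count x = 0 := by omega
      have hApin := tcnt_pin_walk t1 hAcnt1
      have hBpin := tcnt_pin_walk' t hB_cnt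
      have hCzero : ∀ b, tcnt x b t3.support.tail = 0 :=
        fun b => tcnt_eq_zero x b _ hCcnt0
      rw [hCzero] at htcL
      rcases Nat.mod_two_eq_zero_or_one t1.support.tail.length with ha | ha <;>
        rcases Nat.mod_two_eq_zero_or_one t.support.length with hm | hm
      · exfalso
        have e1 : (t1.support.tail.length % 2 == 0) = true := by rw [ha]; rfl
        have e2 : (t1.support.tail.length % 2 == 1) = false := by rw [ha]; rfl
        have e3 : (t.support.length % 2 == 0) = true := by rw [hm]; rfl
        rw [e1] at hApin
        rw [e3] at hBpin
        rw [e2] at htcL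
        simp only [Bool.xor_false] at htcL
        rw [hApin.1, hBpin.1] at htcL
        rw [htcL] at hodd1
        simp [Nat.odd_iff] at hodd1
      · rw [hq1len, Nat.odd_iff, hm]
      · exfalso
        have e1 : (t1.support.tail.length % 2 == 0) = false := by rw [ha]; rfl
        have e2 : (t1.support.tail.length % 2 == 1) = true := by rw [ha]; rfl
        have e3 : (t.support.length % 2 == 0) = true := by rw [hm]; rfl
        rw [e1] at hApin
        rw [e3] at hBpin
        rw [e2] at htcL
        simp only [Bool.xor_true, Bool.not_true] at htcL
        have hApin2 : tcnt x true t1.support.tail = 0 := by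
          have := hApin.2
          rwa [Bool.not_false] at this
        have hBpin2 : tcnt x false t.support = 0 := by
          have := hBpin.2
          rwa [Bool.not_true] at this
        rw [hApin2, hBpin2] at htcL
        rw [htcL] at hodd1
        simp [Nat.odd_iff] at hodd1
      · rw [hq1len, Nat.odd_iff, hm]
  refine ⟨x, q1, q2, hq1t, hq2t, hq1odd, ?_, hdisj, hmemiff⟩
  rw [Nat.odd_iff] at hq1odd ⊢
  omega

end Split

end OddDecomp

open SimpleGraph

/-- An eulerian subgraph of `G`: a connected (hence vertex-nonempty) subgraph of `G`
in which every vertex has even degree. -/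
def IsEulerianSubgraph {V : Type*} (G : SimpleGraph V) (H : G.Subgraph) : Prop :=
  H.Connected ∧ ∀ v ∈ H.verts, Even ((H.neighborSet v).ncard)

/-- A `k`-odd decomposition of `G`: a partition of the edge set of `G` into the edge
sets of `k` eulerian subgraphs, each having an odd number of edges. -/
def IsKOddDecomposition {V : Type*} (G : SimpleGraph V) (k : ℕ)
    (D : Fin k → G.Subgraph) : Prop :=
  (∀ i, IsEulerianSubgraph G (D i)) ∧
  (∀ i, Odd ((D i).edgeSet.ncard)) ∧
  (∀ i j, i ≠ j → Disjoint ((D i).edgeSet) ((D j).edgeSet)) ∧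
  (⋃ i, (D i).edgeSet) = G.edgeSet

/-- A rooted `k`-odd decomposition: a `k`-odd decomposition all of whose constituents
share a common vertex. -/
def IsRootedKOddDecomposition {V : Type*} (G : SimpleGraph V) (k : ℕ)
    (D : Fin k → G.Subgraph) : Prop :=
  IsKOddDecomposition G k D ∧ ∃ v : V, ∀ i, v ∈ (D i).verts

lemma walk_toSubgraph_props {V : Type*} [DecidableEq V] {G : SimpleGraph V} {x : V}
    (q : G.Walk x x) (hq : q.IsTrail) :
    IsEulerianSubgraph G q.toSubgraph ∧ q.toSubgraph.edgeSet.ncard = q.length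
      ∧ x ∈ q.toSubgraph.verts := by
  refine ⟨⟨q.toSubgraph_connected, ?_⟩, ?_, q.start_mem_verts_toSubgraph⟩
  · intro w _
    have hset : q.toSubgraph.neighborSet w = {y | s(w, y) ∈ q.edges} := by
      ext y
      rw [Subgraph.mem_neighborSet, ← Subgraph.mem_edgeSet, q.edgeSet_toSubgraph]
      rfl
    rw [hset, (OddDecomp.ncard_fiber w q.edges hq.edges_nodup).2,
      hq.even_countP_edges_iff w]
    exact fun h => absurd rfl h
  · rw [q.edgeSet_toSubgraph]
    have h1 : {e | e ∈ q.edges} = ↑q.edges.toFinset := by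
      ext e
      simp
    rw [Walk.edgeSet, h1, Set.ncard_coe_finset, List.toFinset_card_of_nodup hq.edges_nodup,
      q.length_edges]

/-- Theorem 1: every connected 4-regular graph of odd order has a rooted
decomposition into two odd closed trails. -/
theorem fourRegular_oddOrder_rooted2OddDecomposition {V : Type*} [Fintype V]
    (G : SimpleGraph V) (hconn : G.Connected)
    (hreg : ∀ v : V, (G.neighborSet v).ncard = 4)
    (hodd : Odd (Fintype.card V)) :
    ∃ D : Fin 2 → G.Subgraph, IsRootedKOddDecomposition G 2 D := by
  classical
  have hEven : ∀ w, Even ((G.neighborSet w).ncard) := fun w => by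
    rw [hreg w]
    exact ⟨2, rfl⟩
  have hpos : 0 < Fintype.card V := by
    rcases hodd with ⟨k, hk⟩
    omega
  obtain ⟨v0⟩ := Fintype.card_pos_iff.mp hpos
  obtain ⟨p, hpE⟩ := OddDecomp.exists_eulerian hconn hEven v0
  have hptrail := hpE.isTrail
  -- edge count
  have hdeg : ∀ v : V, G.degree v = 4 := by
    intro v
    have h2 : (G.neighborSet v).ncard = G.degree v := by
      rw [Set.ncard_eq_toFinset_card', ← neighborFinset_def]
      rfl
    rw [← h2, hreg v]
  have hcard : G.edgeFinset.card = 2 * Fintype.card V := by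
    have hsum := G.sum_degrees_eq_twice_card_edges
    simp only [hdeg, Finset.sum_const, smul_eq_mul] at hsum
    rw [Finset.card_univ] at hsum
    omega
  have hplen : p.length = 2 * Fintype.card V := by
    have h1 : p.edges.length = G.edgeFinset.card := by
      have h2 := congrArg Finset.card hpE.edgesFinset_eq
      exact h2
    rw [← p.length_edges, h1, hcard]
  -- each vertex appears exactly twice in the tail of the eulerian circuit
  have hcount : ∀ y : V, p.support.tail.count y = 2 := by
    intro y
    have h4 : p.edges.countP (fun e => y ∈ e) = 4 := by
      have hset : {z | s(y, z) ∈ p.edges} = G.neighborSet y := by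
        ext z
        rw [Set.mem_setOf_eq, hpE.mem_edges_iff, G.mem_edgeSet]
        rfl
      have h5 := (OddDecomp.ncard_fiber y p.edges hptrail.edges_nodup).2
      rw [hset, hreg y] at h5
      exact h5.symm
    have hadd := OddDecomp.countP_edges_add p y
    have hsupp : List.count y p.support
        = List.count y p.support.tail + (if y = v0 then 1 else 0) := by
      conv_lhs => rw [p.support_eq_cons]
      rw [List.count_cons]
      by_cases hyv : y = v0
      · simp [hyv]
      · have h1 : (v0 == y) = false := by
          simp only [beq_eq_false_iff_ne, ne_eq]
          exact fun h => hyv h.symm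
        simp [hyv, h1]
    rw [h4, hsupp] at hadd
    by_cases hyv : y = v0
    · subst hyv
      simp at hadd
      omega
    · simp [hyv] at hadd
      omega
  obtain ⟨x, q1, q2, hq1t, hq2t, hq1odd, hq2odd, hdisj, hmemiff⟩ :=
    OddDecomp.split_lemma p hpE hodd hplen hcount
  obtain ⟨hq1E, hq1card, hq1x⟩ := walk_toSubgraph_props q1 hq1t
  obtain ⟨hq2E, hq2card, hq2x⟩ := walk_toSubgraph_props q2 hq2t
  refine ⟨![q1.toSubgraph, q2.toSubgraph], ⟨⟨?_, ?_, ?_, ?_⟩, x, ?_⟩⟩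
  · intro i
    fin_cases i
    · exact hq1E
    · exact hq2E
  · intro i
    fin_cases i
    · show Odd (q1.toSubgraph.edgeSet.ncard)
      rw [hq1card]
      exact hq1odd
    · show Odd (q2.toSubgraph.edgeSet.ncard)
      rw [hq2card]
      exact hq2odd
  · intro i j hij
    fin_cases i <;> fin_cases j
    · exact absurd rfl hij
    · show Disjoint q1.toSubgraph.edgeSet q2.toSubgraph.edgeSet
      rw [q1.edgeSet_toSubgraph, q2.edgeSet_toSubgraph, Set.disjoint_left]
      intro e he1 he2
      exact hdisj he1 he2
    · show Disjoint q2.toSubgraph.edgeSet q1.toSubgraph.edgeSet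
      rw [q1.edgeSet_toSubgraph, q2.edgeSet_toSubgraph, Set.disjoint_right]
      intro e he1 he2
      exact hdisj he1 he2
    · exact absurd rfl hij
  · ext e
    simp only [Set.mem_iUnion, Fin.exists_fin_two, Matrix.cons_val_zero,
      Matrix.cons_val_one, Matrix.head_cons, q1.edgeSet_toSubgraph,
      q2.edgeSet_toSubgraph, Set.mem_setOf_eq]
    rw [Walk.mem_edgeSet, Walk.mem_edgeSet, ← hmemiff e, hpE.mem_edges_iff]
  · intro i
    fin_cases i
    · exact hq1x
    · exact hq2x
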